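/- Let $K \subset \mathbb{R}^2$ be a compact convex body whose support function $h(\vartheta) = \sup_{y \in K} \langle (\cos\vartheta, \sin\vartheta), y \rangle$ is twice continuously differentiable with $h(\vartheta) + h''(\vartheta) > 0$ for all $\vartheta$. Fix $\vartheta_0 \in \mathbb{R}$ and let $i(\vartheta) = h(\vartheta) n_\vartheta - \big(\int_{\vartheta_0}^{\vartheta} h(\tau)\,d\tau - h'(\vartheta_0)\big) t_\vartheta$ be the left involute of $\partial K$ starting at $i(\vartheta_0)$. Then the restriction of $i$ to $[\vartheta_0, \vartheta_0 + 3\pi/2]$ is a self-distancing curve: for all $\vartheta_0 \le \vartheta_1 \le \vartheta_2 \le \vartheta_3 \le \vartheta_0 + 3\pi/2$, $\|i(\vartheta_2) - i(\vartheta_1)\| \le \|i(\vartheta_3) - i(\vartheta_1)\|$. -/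

import Mathlib

open Real MeasureTheory

noncomputable def vec2 (a b : ℝ) : EuclideanSpace ℝ (Fin 2) :=
  (WithLp.equiv 2 (Fin 2 → ℝ)).symm ![a, b]

/-- The outer normal direction `n_ϑ = (cos ϑ, sin ϑ)`. -/
noncomputable def nvec (θ : ℝ) : EuclideanSpace ℝ (Fin 2) := vec2 (Real.cos θ) (Real.sin θ)

/-- The tangent direction `t_ϑ = (-sin ϑ, cos ϑ)`. -/
noncomputable def tvec (θ : ℝ) : EuclideanSpace ℝ (Fin 2) := vec2 (-Real.sin θ) (Real.cos θ)

lemma vec2_zero (a b : ℝ) : vec2 a b 0 = a := rfl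
lemma vec2_one (a b : ℝ) : vec2 a b 1 = b := rfl

lemma vec2_smul (r a b : ℝ) : r • vec2 a b = vec2 (r*a) (r*b) := by
  ext j; fin_cases j <;> simp [vec2]

lemma vec2_sub (a b c d : ℝ) : vec2 a b - vec2 c d = vec2 (a-c) (b-d) := by
  ext j; fin_cases j <;> rfl

lemma vec2_congr {a b c d : ℝ} (h1 : a = c) (h2 : b = d) : vec2 a b = vec2 c d := by
  rw [h1, h2]

lemma norm_vec2 (a b : ℝ) : ‖vec2 a b‖ = Real.sqrt (a^2 + b^2) := by
  simp [EuclideanSpace.norm_eq, Fin.sum_univ_two, vec2_zero, vec2_one, sq_abs]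

lemma inner_vec2 (a b : ℝ) (y : EuclideanSpace ℝ (Fin 2)) :
    (inner ℝ (vec2 a b) y : ℝ) = a * y 0 + b * y 1 := by
  simp [PiLp.inner_apply, Fin.sum_univ_two, vec2_zero, vec2_one, RCLike.inner_apply, mul_comm]


/-- The restriction of the left involute to `[ϑ₀, ϑ₀ + 3π/2]` is a
self-distancing curve (SDC): for `ϑ₀ ≤ ϑ₁ ≤ ϑ₂ ≤ ϑ₃ ≤ ϑ₀ + 3π/2`,
`‖i(ϑ₂) - i(ϑ₁)‖ ≤ ‖i(ϑ₃) - i(ϑ₁)‖`. -/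
theorem stmt_12 (K : Set (EuclideanSpace ℝ (Fin 2)))
    (hne : K.Nonempty) (hcp : IsCompact K) (hcv : Convex ℝ K)
    (h : ℝ → ℝ)
    (hsupp : ∀ θ : ℝ, IsLUB ((fun y => (inner ℝ (nvec θ) y : ℝ)) '' K) (h θ))
    (hsm : ContDiff ℝ 2 h) (hpos : ∀ θ, 0 < h θ + deriv (deriv h) θ)
    (θ₀ : ℝ) (i : ℝ → EuclideanSpace ℝ (Fin 2))
    (hi : ∀ θ, i θ = h θ • nvec θ - ((∫ τ in θ₀..θ, h τ) - deriv h θ₀) • tvec θ) :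
    ∀ θ₁ θ₂ θ₃, θ₀ ≤ θ₁ → θ₁ ≤ θ₂ → θ₂ ≤ θ₃ → θ₃ ≤ θ₀ + 3 * Real.pi / 2 →
      ‖i θ₂ - i θ₁‖ ≤ ‖i θ₃ - i θ₁‖ := by
  -- differentiability facts
  have hdh : Differentiable ℝ h := hsm.differentiable two_ne_zero
  have hch : Continuous h := hdh.continuous
  have hsm1 : ContDiff ℝ 1 (deriv h) := by
    have : ContDiff ℝ (1+1) h := by norm_num; exact hsm
    exact (contDiff_succ_iff_deriv.mp this).2.2
  have hdd : Differentiable ℝ (deriv h) := hsm1.differentiable one_ne_zero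
  have hcdd : Continuous (deriv (deriv h)) := (contDiff_one_iff_deriv.mp hsm1).2
  set g : ℝ → ℝ := fun θ => (∫ τ in θ₀..θ, h τ) - deriv h θ₀ with hgdef
  have hdg : ∀ θ, HasDerivAt g (h θ) θ := by
    intro θ
    exact ((intervalIntegral.integral_hasDerivAt_right
      (hch.intervalIntegrable θ₀ θ)
      (hch.stronglyMeasurableAtFilter _ _) hch.continuousAt).sub_const _)
  set φ : ℝ → ℝ := fun θ => deriv h θ + g θ with hφdef
  have hφd : ∀ θ, HasDerivAt φ (h θ + deriv (deriv h) θ) θ := by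
    intro θ
    have := ((hdd θ).hasDerivAt.add (hdg θ))
    rw [add_comm]; exact this
  have hφ0 : φ θ₀ = 0 := by simp [hφdef, hgdef]
  have hφmono : StrictMono φ :=
    strictMono_of_deriv_pos (fun θ => by rw [(hφd θ).deriv]; exact hpos θ)
  have hφnn : ∀ θ, θ₀ ≤ θ → 0 ≤ φ θ := by
    intro θ hθ; rw [← hφ0]; exact hφmono.monotone hθ
  -- Lemma A: support inequality
  have hA : ∀ σ τ : ℝ, h τ * Real.cos (σ - τ) + deriv h τ * Real.sin (σ - τ) ≤ h σ := by
    intro σ τ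
    obtain ⟨y, hyK, hy⟩ : ∃ y ∈ K, (inner ℝ (nvec τ) y : ℝ) = h τ := by
      have hS : IsClosed ((fun y => (inner ℝ (nvec τ) y : ℝ)) '' K) :=
        (hcp.image (Continuous.inner continuous_const continuous_id)).isClosed
      obtain ⟨y, hyK, hy⟩ := (hsupp τ).mem_of_isClosed (hne.image _) hS
      exact ⟨y, hyK, hy⟩
    have hub : ∀ σ' : ℝ, Real.cos σ' * y 0 + Real.sin σ' * y 1 ≤ h σ' := by
      intro σ'
      have := (hsupp σ').1 (Set.mem_image_of_mem _ hyK)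
      rwa [show nvec σ' = vec2 (Real.cos σ') (Real.sin σ') from rfl, inner_vec2] at this
    have hτval : h τ = Real.cos τ * y 0 + Real.sin τ * y 1 := by
      rw [← hy, show nvec τ = vec2 (Real.cos τ) (Real.sin τ) from rfl, inner_vec2]
    set f : ℝ → ℝ := fun σ' => h σ' - (Real.cos σ' * y 0 + Real.sin σ' * y 1) with hfdef
    have hfd : ∀ σ', HasDerivAt f
        (deriv h σ' - (-Real.sin σ' * y 0 + Real.cos σ' * y 1)) σ' := by
      intro σ'
      exact (hdh σ').hasDerivAt.sub
        (((Real.hasDerivAt_cos σ').mul_const (y 0)).add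
          ((Real.hasDerivAt_sin σ').mul_const (y 1)))
    have hmin : IsLocalMin f τ := by
      have hge : ∀ σ', f τ ≤ f σ' := by
        intro σ'
        have h1 := hub σ'
        simp only [hfdef]
        rw [← hτval]
        linarith
      exact Filter.Eventually.of_forall hge
    have hd0 : deriv h τ = -Real.sin τ * y 0 + Real.cos τ * y 1 := by
      have := hmin.deriv_eq_zero
      rw [(hfd τ).deriv] at this
      linarith
    calc h τ * Real.cos (σ - τ) + deriv h τ * Real.sin (σ - τ)
        = Real.cos σ * y 0 + Real.sin σ * y 1 := by
          rw [hτval, hd0, Real.cos_sub, Real.sin_sub]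
          linear_combination (y 0 * Real.cos σ + y 1 * Real.sin σ) * (Real.sin_sq_add_cos_sq τ)
      _ ≤ h σ := hub σ
  -- coordinates of the involute
  set i1 : ℝ → ℝ := fun θ => h θ * Real.cos θ + g θ * Real.sin θ with hi1def
  set i2 : ℝ → ℝ := fun θ => h θ * Real.sin θ - g θ * Real.cos θ with hi2def
  have hiθ : ∀ θ, i θ = vec2 (i1 θ) (i2 θ) := by
    intro θ
    rw [hi θ]
    show h θ • vec2 (Real.cos θ) (Real.sin θ) - g θ • vec2 (-Real.sin θ) (Real.cos θ) = _
    rw [vec2_smul, vec2_smul, vec2_sub]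
    exact vec2_congr (by simp only [hi1def]; try ring) (by simp only [hi2def]; try ring)
  have hi1d : ∀ θ, HasDerivAt i1 (φ θ * Real.cos θ) θ := by
    intro θ
    have h1' := ((hdh θ).hasDerivAt.mul (Real.hasDerivAt_cos θ)).add
      ((hdg θ).mul (Real.hasDerivAt_sin θ))
    have he : φ θ * Real.cos θ = (deriv h θ * Real.cos θ + h θ * -Real.sin θ)
        + (h θ * Real.sin θ + g θ * Real.cos θ) := by simp only [hφdef]; ring
    rw [hi1def, he]; exact h1'
  have hi2d : ∀ θ, HasDerivAt i2 (φ θ * Real.sin θ) θ := by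
    intro θ
    have h2' := ((hdh θ).hasDerivAt.mul (Real.hasDerivAt_sin θ)).sub
      ((hdg θ).mul (Real.hasDerivAt_cos θ))
    have he : φ θ * Real.sin θ = (deriv h θ * Real.sin θ + h θ * Real.cos θ)
        - (h θ * Real.cos θ + g θ * -Real.sin θ) := by simp only [hφdef]; ring
    rw [hi2def, he]; exact h2'
  intro θ₁ θ₂ θ₃ h01 h12 h23 h3e
  set D : ℝ → ℝ := fun θ => (i1 θ - i1 θ₁)^2 + (i2 θ - i2 θ₁)^2 with hDdef
  set P : ℝ → ℝ := fun θ => Real.cos θ * (i1 θ - i1 θ₁) + Real.sin θ * (i2 θ - i2 θ₁) with hPdef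
  have hDd : ∀ θ, HasDerivAt D (2 * φ θ * P θ) θ := by
    intro θ
    have hD' := (((hi1d θ).sub_const (i1 θ₁)).pow 2).add (((hi2d θ).sub_const (i2 θ₁)).pow 2)
    have he : 2 * φ θ * P θ = 2 * (i1 θ - i1 θ₁) ^ (2-1) * (φ θ * Real.cos θ)
        + 2 * (i2 θ - i2 θ₁) ^ (2-1) * (φ θ * Real.sin θ) := by
      simp only [hPdef]; ring
    rw [hDdef, he]; exact hD'
  have hPval : ∀ θ, P θ = h θ - (h θ₁ * Real.cos (θ - θ₁) + deriv h θ₁ * Real.sin (θ - θ₁))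
      + φ θ₁ * Real.sin (θ - θ₁) := by
    intro θ
    simp only [hPdef, hi1def, hi2def, hφdef, Real.cos_sub, Real.sin_sub]
    linear_combination h θ * Real.sin_sq_add_cos_sq θ
  have hπ := Real.pi_pos
  have hPnn : ∀ θ, θ₁ ≤ θ → θ ≤ θ₀ + 3 * π / 2 → 0 ≤ P θ := by
    intro θ hl hr
    rw [hPval θ]
    rcases le_or_gt 0 (Real.sin (θ - θ₁)) with hs | hs
    · have hA1 := hA θ θ₁
      have := mul_nonneg (hφnn θ₁ h01) hs
      linarith
    · have hπlt : π < θ - θ₁ := by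
        by_contra hc
        push_neg at hc
        exact absurd (Real.sin_nonneg_of_nonneg_of_le_pi (by linarith) hc) (not_le.mpr hs)
      have hwcont : Continuous (fun τ => (h τ + deriv (deriv h) τ) * Real.sin (θ - τ)) :=
        (hch.add hcdd).mul (Real.continuous_sin.comp (continuous_const.sub continuous_id))
      have hρd : ∀ τ ∈ Set.uIcc θ₀ θ₁,
          HasDerivAt (fun τ => h τ * Real.cos (θ - τ) + deriv h τ * Real.sin (θ - τ))
            ((h τ + deriv (deriv h) τ) * Real.sin (θ - τ)) τ := by
        intro τ _
        have hc : HasDerivAt (fun τ => Real.cos (θ - τ)) (Real.sin (θ - τ)) τ := by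
          have := (Real.hasDerivAt_cos (θ - τ)).comp τ ((hasDerivAt_id τ).const_sub θ)
          simpa [Function.comp_def] using this
        have hs' : HasDerivAt (fun τ => Real.sin (θ - τ)) (-Real.cos (θ - τ)) τ := by
          have := (Real.hasDerivAt_sin (θ - τ)).comp τ ((hasDerivAt_id τ).const_sub θ)
          simpa [Function.comp_def] using this
        have := ((hdh τ).hasDerivAt.mul hc).add ((hdd τ).hasDerivAt.mul hs')
        have he : (h τ + deriv (deriv h) τ) * Real.sin (θ - τ)
            = (deriv h τ * Real.cos (θ - τ) + h τ * Real.sin (θ - τ))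
              + (deriv (deriv h) τ * Real.sin (θ - τ) + deriv h τ * -Real.cos (θ - τ)) := by ring
        rw [he]; exact this
      have hint : (∫ τ in θ₀..θ₁, (h τ + deriv (deriv h) τ) * Real.sin (θ - τ))
          = (h θ₁ * Real.cos (θ - θ₁) + deriv h θ₁ * Real.sin (θ - θ₁))
            - (h θ₀ * Real.cos (θ - θ₀) + deriv h θ₀ * Real.sin (θ - θ₀)) :=
        intervalIntegral.integral_eq_sub_of_hasDerivAt hρd (hwcont.intervalIntegrable _ _)
      have hφint : (∫ τ in θ₀..θ₁, (h τ + deriv (deriv h) τ)) = φ θ₁ := by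
        rw [intervalIntegral.integral_eq_sub_of_hasDerivAt (fun τ _ => hφd τ)
          ((hch.add hcdd).intervalIntegrable _ _), hφ0, sub_zero]
      have hcmp : (∫ τ in θ₀..θ₁, (h τ + deriv (deriv h) τ) * Real.sin (θ - τ))
          ≤ ∫ τ in θ₀..θ₁, (h τ + deriv (deriv h) τ) * Real.sin (θ - θ₁) := by
        apply intervalIntegral.integral_mono_on h01 (hwcont.intervalIntegrable _ _)
          (((hch.add hcdd).mul continuous_const).intervalIntegrable _ _)
        intro τ hτ
        apply mul_le_mul_of_nonneg_left _ (hpos τ).le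
        have e1 : Real.sin (θ - τ - π) = -Real.sin (θ - τ) := Real.sin_sub_pi _
        have e2 : Real.sin (θ - θ₁ - π) = -Real.sin (θ - θ₁) := Real.sin_sub_pi _
        have hm : Real.sin (θ - θ₁ - π) ≤ Real.sin (θ - τ - π) :=
          Real.strictMonoOn_sin.monotoneOn ⟨by linarith, by linarith [hτ.1]⟩
            ⟨by linarith [hτ.2], by linarith [hτ.1]⟩ (by linarith [hτ.2])
        linarith
      have hsmul : (∫ τ in θ₀..θ₁, (h τ + deriv (deriv h) τ) * Real.sin (θ - θ₁))
          = φ θ₁ * Real.sin (θ - θ₁) := by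
        rw [intervalIntegral.integral_mul_const, hφint]
      have hA0 := hA θ θ₀
      linarith
  have hDmono : MonotoneOn D (Set.Icc θ₁ (θ₀ + 3 * π / 2)) := by
    apply monotoneOn_of_deriv_nonneg (convex_Icc _ _)
    · have : Differentiable ℝ D := fun θ => (hDd θ).differentiableAt
      exact this.continuous.continuousOn
    · intro x _
      exact (hDd x).differentiableAt.differentiableWithinAt
    · intro x hx
      rw [interior_Icc] at hx
      rw [(hDd x).deriv]
      have := mul_nonneg (hφnn x (le_trans h01 hx.1.le)) (hPnn x hx.1.le hx.2.le)
      linarith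
  have hkey : D θ₂ ≤ D θ₃ :=
    hDmono ⟨h12, by linarith⟩ ⟨le_trans h12 h23, h3e⟩ h23
  rw [hiθ θ₂, hiθ θ₃, hiθ θ₁, vec2_sub, vec2_sub, norm_vec2, norm_vec2]
  exact Real.sqrt_le_sqrt hkey
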